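/- Let μ be an uncountable regular cardinal and let μ⁺ denote its cardinal successor. Let A and B be sets of ordinals contained in the ordinals below the initial ordinal of μ⁺, and suppose A and B contain the same ordinals below μ. Suppose further that for every ordinal ξ with μ ≤ ξ < μ⁺ there exist bijections f_ξ and g_ξ from the ordinals below μ onto the ordinals below ξ such that: (ξ ∈ A iff there is a club C in μ with otp(f_ξ '' γ) ∈ A for every γ ∈ C) and (ξ ∉ A iff there is a club C in μ with otp(f_ξ '' γ) ∉ A for every γ ∈ C), and likewise (ξ ∈ B iff there is a club C in μ with otp(g_ξ '' γ) ∈ B for every γ ∈ C) and (ξ ∉ B iff there is a club C in μ with otp(g_ξ '' γ) ∉ B for every γ ∈ C). Then A = B. -/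

import Mathlib

universe u

/-- `C` is a club in the ordinal `μ`: a set of ordinals below `μ` that is
unbounded in `μ` and closed (every limit `δ < μ` in which `C` is unbounded
belongs to `C`). -/
def IsClubIn (C : Set Ordinal.{u}) (μ : Ordinal.{u}) : Prop :=
  C ⊆ Set.Iio μ ∧
  (∀ α < μ, ∃ γ ∈ C, α ≤ γ) ∧
  (∀ δ < μ, Order.IsSuccLimit δ → (∀ α < δ, ∃ γ ∈ C, α ≤ γ ∧ γ < δ) → δ ∈ C)

/-- The order type of a set `S` of ordinals: the unique ordinal order-isomorphic
to `S` (with the order inherited from the ordinals), whenever `S` is set-sized. -/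
noncomputable def otp (S : Set Ordinal.{u}) : Ordinal.{u} :=
  sInf {o : Ordinal.{u} | Ordinal.lift.{u + 1} o =
    Ordinal.type (Subrel ((· < ·) : Ordinal.{u} → Ordinal.{u} → Prop) (· ∈ S))}


set_option linter.deprecated false

open Cardinal in
lemma otp_spec {S : Set Ordinal.{u}} {ρ : Ordinal.{u}} (hS : S ⊆ Set.Iio ρ) :
    Ordinal.lift.{u + 1} (otp S) =
      Ordinal.type (Subrel ((· < ·) : Ordinal.{u} → Ordinal.{u} → Prop) (· ∈ S)) := by
  have emb : Subrel ((· < ·) : Ordinal.{u} → Ordinal.{u} → Prop) (· ∈ S) ↪r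
      Subrel ((· < ·) : Ordinal.{u} → Ordinal.{u} → Prop) (· ∈ Set.Iio ρ) :=
    ⟨Set.embeddingOfSubset _ _ hS, Iff.rfl⟩
  have hle : Ordinal.type (Subrel ((· < ·) : Ordinal.{u} → Ordinal.{u} → Prop) (· ∈ S))
      ≤ Ordinal.lift.{u + 1} ρ := by
    calc Ordinal.type (Subrel ((· < ·) : Ordinal.{u} → Ordinal.{u} → Prop) (· ∈ S))
        ≤ Ordinal.type (Subrel ((· < ·) : Ordinal.{u} → Ordinal.{u} → Prop) (· ∈ Set.Iio ρ)) :=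
          emb.ordinal_type_le
      _ = Ordinal.lift.{u + 1} ρ := Ordinal.type_lt_Iio ρ
  obtain ⟨o, ho⟩ := Ordinal.mem_range_lift_of_le hle
  have hne : {o : Ordinal.{u} | Ordinal.lift.{u + 1} o =
      Ordinal.type (Subrel ((· < ·) : Ordinal.{u} → Ordinal.{u} → Prop) (· ∈ S))}.Nonempty := ⟨o, ho⟩
  exact csInf_mem hne

open Cardinal in
lemma otp_lt_ord {S : Set Ordinal.{u}} {ρ : Ordinal.{u}} {ν : Cardinal.{u}}
    (hS : S ⊆ Set.Iio ρ) (hcard : #S < Cardinal.lift.{u + 1} ν) : otp S < ν.ord := by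
  rw [Cardinal.lt_ord]
  have h1 : Cardinal.lift.{u + 1} (otp S).card = #S := by
    rw [Ordinal.lift_card, otp_spec hS, Ordinal.card_type]
  rw [← Cardinal.lift_lt, h1]
  exact hcard

lemma club_strict {μ : Cardinal.{u}} (hreg : μ.IsRegular) {E : Set Ordinal.{u}}
    (hE : IsClubIn E μ.ord) : ∀ α < μ.ord, ∃ γ ∈ E, α < γ := by
  have hlim : Order.IsSuccLimit μ.ord := Cardinal.isSuccLimit_ord hreg.aleph0_le
  intro α hα
  obtain ⟨γ, hγE, hγ⟩ := hE.2.1 (Order.succ α) (hlim.succ_lt hα)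
  exact ⟨γ, hγE, Order.succ_le_iff.mp hγ⟩

lemma club_inter {μ : Cardinal.{u}} (hreg : μ.IsRegular) (hunc : Cardinal.aleph0 < μ)
    {C D : Set Ordinal.{u}} (hC : IsClubIn C μ.ord) (hD : IsClubIn D μ.ord) :
    IsClubIn (C ∩ D) μ.ord := by
  refine ⟨fun x hx => hC.1 hx.1, ?_, ?_⟩
  · intro α hα
    classical
    let sC : Ordinal.{u} → Ordinal.{u} := fun p =>
      if h : p < μ.ord then (club_strict hreg hC p h).choose else 0
    let sD : Ordinal.{u} → Ordinal.{u} := fun p =>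
      if h : p < μ.ord then (club_strict hreg hD p h).choose else 0
    have hsC : ∀ p (hp : p < μ.ord), sC p ∈ C ∧ p < sC p := by
      intro p hp
      simp only [sC, dif_pos hp]
      exact (club_strict hreg hC p hp).choose_spec
    have hsD : ∀ p (hp : p < μ.ord), sD p ∈ D ∧ p < sD p := by
      intro p hp
      simp only [sD, dif_pos hp]
      exact (club_strict hreg hD p hp).choose_spec
    let s : ℕ → Ordinal.{u} := fun n => Nat.rec α (fun n p => if n % 2 = 0 then sC p else sD p) n
    have hslt : ∀ n, s n < μ.ord := by
      intro n
      induction n with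
      | zero => exact hα
      | succ n ih =>
        show (if n % 2 = 0 then sC (s n) else sD (s n)) < μ.ord
        split
        · exact hC.1 (hsC _ ih).1
        · exact hD.1 (hsD _ ih).1
    have hmono : StrictMono s := by
      apply strictMono_nat_of_lt_succ
      intro n
      show s n < (if n % 2 = 0 then sC (s n) else sD (s n))
      split
      · exact (hsC _ (hslt n)).2
      · exact (hsD _ (hslt n)).2
    have hδlt : (⨆ n, s n) < μ.ord := by
      apply Cardinal.iSup_lt_ord_lift_of_isRegular hreg ?_ hslt
      simpa using hunc
    have hle_δ : ∀ n, s n ≤ ⨆ n, s n := fun n => le_ciSup (Ordinal.bddAbove_range s) n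
    have hlt_δ : ∀ n, s n < ⨆ n, s n :=
      fun n => lt_of_lt_of_le (hmono (Nat.lt_succ_self n)) (hle_δ (n + 1))
    have hδlim : Order.IsSuccLimit (⨆ n, s n) := by
      refine Ordinal.isSuccLimit_iff.mpr ⟨?_, Order.isSuccPrelimit_of_succ_lt ?_⟩
      · exact (lt_of_le_of_lt (zero_le (a := s 0)) (hlt_δ 0)).ne'
      · intro a ha
        obtain ⟨n, hn⟩ := Ordinal.lt_iSup_iff.mp ha
        exact lt_of_le_of_lt (Order.succ_le_iff.mpr hn) (hlt_δ n)
    have hmemC : (⨆ n, s n) ∈ C := by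
      apply hC.2.2 _ hδlt hδlim
      intro β hβ
      obtain ⟨m, hm⟩ := Ordinal.lt_iSup_iff.mp hβ
      have hcmem : s (2 * m + 1) ∈ C := by
        have heq : s (2 * m + 1) =
            (if (2 * m) % 2 = 0 then sC (s (2 * m)) else sD (s (2 * m))) := rfl
        rw [heq, if_pos (by omega)]
        exact (hsC (s (2 * m)) (hslt (2 * m))).1
      refine ⟨s (2 * m + 1), hcmem, ?_, hlt_δ (2 * m + 1)⟩
      exact le_of_lt (lt_of_lt_of_le hm (hmono.monotone (by omega : m ≤ 2 * m + 1)))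
    have hmemD : (⨆ n, s n) ∈ D := by
      apply hD.2.2 _ hδlt hδlim
      intro β hβ
      obtain ⟨m, hm⟩ := Ordinal.lt_iSup_iff.mp hβ
      have hdmem : s (2 * m + 2) ∈ D := by
        have heq : s (2 * m + 2) =
            (if (2 * m + 1) % 2 = 0 then sC (s (2 * m + 1)) else sD (s (2 * m + 1))) := rfl
        rw [heq, if_neg (by omega)]
        exact (hsD (s (2 * m + 1)) (hslt (2 * m + 1))).1
      refine ⟨s (2 * m + 2), hdmem, ?_, hlt_δ (2 * m + 2)⟩
      exact le_of_lt (lt_of_lt_of_le hm (hmono.monotone (by omega : m ≤ 2 * m + 2)))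
    exact ⟨⨆ n, s n, ⟨hmemC, hmemD⟩, le_of_lt (hlt_δ 0)⟩
  · intro δ hδ hlimδ hub
    refine ⟨hC.2.2 δ hδ hlimδ ?_, hD.2.2 δ hδ hlimδ ?_⟩
    · intro α hα
      obtain ⟨γ, hγ, hh⟩ := hub α hα
      exact ⟨γ, hγ.1, hh⟩
    · intro α hα
      obtain ⟨γ, hγ, hh⟩ := hub α hα
      exact ⟨γ, hγ.2, hh⟩

lemma closure_club {μ : Cardinal.{u}} (hreg : μ.IsRegular) (hunc : Cardinal.aleph0 < μ)
    (F : Ordinal.{u} → Ordinal.{u}) (hF : ∀ β < μ.ord, F β < μ.ord) :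
    IsClubIn {γ : Ordinal.{u} | γ < μ.ord ∧ ∀ β < γ, F β < γ} μ.ord := by
  have hlim : Order.IsSuccLimit μ.ord := Cardinal.isSuccLimit_ord hreg.aleph0_le
  refine ⟨fun x hx => hx.1, ?_, ?_⟩
  · intro α hα
    classical
    let step : Ordinal.{u} → Ordinal.{u} := fun p =>
      if h : p < μ.ord then max (Order.succ p) (Ordinal.blsub.{u, u} p (fun β _ => F β)) else 0
    have hstep : ∀ p (hp : p < μ.ord),
        step p < μ.ord ∧ p < step p ∧ ∀ β < p, F β < step p := by
      intro p hp
      have h1 : Ordinal.blsub.{u, u} p (fun β _ => F β) < μ.ord :=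
        Cardinal.blsub_lt_ord_of_isRegular hreg (Cardinal.lt_ord.mp hp)
          (fun i hi => hF i (hi.trans hp))
      simp only [step, dif_pos hp]
      refine ⟨max_lt (hlim.succ_lt hp) h1, lt_of_lt_of_le (Order.lt_succ p) (le_max_left _ _), ?_⟩
      intro β hβ
      exact lt_of_lt_of_le (Ordinal.lt_blsub _ β hβ) (le_max_right _ _)
    let s : ℕ → Ordinal.{u} := fun n => Nat.rec α (fun _ p => step p) n
    have hslt : ∀ n, s n < μ.ord := by
      intro n
      induction n with
      | zero => exact hα
      | succ n ih => exact (hstep _ ih).1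
    have hle_δ : ∀ n, s n ≤ ⨆ n, s n := fun n => le_ciSup (Ordinal.bddAbove_range s) n
    have hδlt : (⨆ n, s n) < μ.ord := by
      apply Cardinal.iSup_lt_ord_lift_of_isRegular hreg ?_ hslt
      simpa using hunc
    refine ⟨⨆ n, s n, ⟨hδlt, ?_⟩, hle_δ 0⟩
    intro β hβ
    obtain ⟨n, hn⟩ := Ordinal.lt_iSup_iff.mp hβ
    have : F β < step (s n) := (hstep _ (hslt n)).2.2 β hn
    exact lt_of_lt_of_le this (hle_δ (n + 1))
  · intro δ hδ hlimδ hub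
    refine ⟨hδ, ?_⟩
    intro β hβ
    obtain ⟨γ, hγ, hle, hltδ⟩ := hub (Order.succ β) (hlimδ.succ_lt hβ)
    exact (hγ.2 β (Order.succ_le_iff.mp hle)).trans hltδ

theorem stmt_7 (μ : Cardinal) (hreg : μ.IsRegular) (hunc : Cardinal.aleph0 < μ)
    (A B : Set Ordinal)
    (hA : A ⊆ Set.Iio (Order.succ μ).ord) (hB : B ⊆ Set.Iio (Order.succ μ).ord)
    (hAB : A ∩ Set.Iio μ.ord = B ∩ Set.Iio μ.ord)
    (h : ∀ ξ, μ.ord ≤ ξ → ξ < (Order.succ μ).ord →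
      ∃ f g, Set.BijOn f (Set.Iio μ.ord) (Set.Iio ξ) ∧
        Set.BijOn g (Set.Iio μ.ord) (Set.Iio ξ) ∧
        (ξ ∈ A ↔ ∃ C, IsClubIn C μ.ord ∧ ∀ γ ∈ C, otp (f '' Set.Iio γ) ∈ A) ∧
        (ξ ∉ A ↔ ∃ C, IsClubIn C μ.ord ∧ ∀ γ ∈ C, otp (f '' Set.Iio γ) ∉ A) ∧
        (ξ ∈ B ↔ ∃ C, IsClubIn C μ.ord ∧ ∀ γ ∈ C, otp (g '' Set.Iio γ) ∈ B) ∧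
        (ξ ∉ B ↔ ∃ C, IsClubIn C μ.ord ∧ ∀ γ ∈ C, otp (g '' Set.Iio γ) ∉ B)) :
    A = B := by
  have hlim : Order.IsSuccLimit μ.ord := Cardinal.isSuccLimit_ord hreg.aleph0_le
  ext ξ
  by_cases hξμ : ξ < μ.ord
  · have := Set.ext_iff.mp hAB ξ
    simp only [Set.mem_inter_iff, Set.mem_Iio, and_iff_left hξμ] at this
    exact this
  by_cases hξs : ξ < (Order.succ μ).ord
  swap
  · constructor
    · intro hx; exact absurd (hA hx) hξs
    · intro hx; exact absurd (hB hx) hξs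
  obtain ⟨f, g, hf, hg, hA1, hA2, hB1, hB2⟩ := h ξ (le_of_not_gt hξμ) hξs
  classical
  set ginv := Function.invFunOn g (Set.Iio μ.ord) with hginvdef
  set finv := Function.invFunOn f (Set.Iio μ.ord) with hfinvdef
  have hginv_maps : Set.MapsTo ginv (Set.Iio ξ) (Set.Iio μ.ord) := hg.surjOn.mapsTo_invFunOn
  have hfinv_maps : Set.MapsTo finv (Set.Iio ξ) (Set.Iio μ.ord) := hf.surjOn.mapsTo_invFunOn
  have hginv_right : ∀ y ∈ Set.Iio ξ, g (ginv y) = y :=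
    fun y hy => hg.surjOn.rightInvOn_invFunOn hy
  have hfinv_right : ∀ y ∈ Set.Iio ξ, f (finv y) = y :=
    fun y hy => hf.surjOn.rightInvOn_invFunOn hy
  set F : Ordinal → Ordinal := fun β => max (ginv (f β)) (finv (g β)) with hFdef
  have hF : ∀ β < μ.ord, F β < μ.ord := fun β hβ =>
    max_lt (hginv_maps (hf.mapsTo hβ)) (hfinv_maps (hg.mapsTo hβ))
  have hDclub := closure_club hreg hunc F hF
  have himg : ∀ γ ∈ {γ : Ordinal | γ < μ.ord ∧ ∀ β < γ, F β < γ},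
      f '' Set.Iio γ = g '' Set.Iio γ := by
    intro γ hγ
    obtain ⟨hγμ, hcl⟩ := hγ
    ext y
    constructor
    · rintro ⟨β, hβ, rfl⟩
      have hβγ : β < γ := hβ
      have hβμ : β < μ.ord := hβγ.trans hγμ
      have hyξ : f β ∈ Set.Iio ξ := hf.mapsTo hβμ
      refine ⟨ginv (f β), ?_, hginv_right _ hyξ⟩
      exact lt_of_le_of_lt (le_max_left _ _) (hcl β hβγ)
    · rintro ⟨β, hβ, rfl⟩
      have hβγ : β < γ := hβ
      have hβμ : β < μ.ord := hβγ.trans hγμ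
      have hyξ : g β ∈ Set.Iio ξ := hg.mapsTo hβμ
      refine ⟨finv (g β), ?_, hfinv_right _ hyξ⟩
      exact lt_of_le_of_lt (le_max_right _ _) (hcl β hβγ)
  have hotp_lt : ∀ γ < μ.ord, otp (f '' Set.Iio γ) < μ.ord := by
    intro γ hγ
    apply otp_lt_ord (ρ := ξ)
    · rintro y ⟨β, hβ, rfl⟩
      exact hf.mapsTo (lt_trans (show β < γ from hβ) hγ)
    · calc Cardinal.mk ↥(f '' Set.Iio γ) ≤ Cardinal.mk ↥(Set.Iio γ) := Cardinal.mk_image_le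
        _ = Cardinal.lift γ.card := Ordinal.mk_Iio_ordinal γ
        _ < Cardinal.lift μ := Cardinal.lift_lt.mpr (Cardinal.lt_ord.mp hγ)
  have hord_pos : (0 : Ordinal) < μ.ord := Cardinal.lt_ord.mpr (by simpa using hreg.pos)
  have hABmem : ∀ x < μ.ord, (x ∈ A ↔ x ∈ B) := by
    intro x hx
    have := Set.ext_iff.mp hAB x
    simp only [Set.mem_inter_iff, Set.mem_Iio, and_iff_left hx] at this
    exact this
  constructor
  · intro hmem
    by_contra hnB
    obtain ⟨C₁, hC₁, hmem₁⟩ := hA1.mp hmem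
    obtain ⟨C₂, hC₂, hmem₂⟩ := hB2.mp hnB
    have hclub := club_inter hreg hunc hC₁ (club_inter hreg hunc hC₂ hDclub)
    obtain ⟨γ, hγ, -⟩ := hclub.2.1 0 hord_pos
    obtain ⟨hγ1, hγ2, hγD⟩ := hγ
    have hx : otp (f '' Set.Iio γ) ∈ A := hmem₁ γ hγ1
    have hxB : otp (f '' Set.Iio γ) ∈ B := (hABmem _ (hotp_lt γ hγD.1)).mp hx
    rw [himg γ hγD] at hxB
    exact hmem₂ γ hγ2 hxB
  · intro hmem
    by_contra hnA
    obtain ⟨C₁, hC₁, hmem₁⟩ := hB1.mp hmem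
    obtain ⟨C₂, hC₂, hmem₂⟩ := hA2.mp hnA
    have hclub := club_inter hreg hunc hC₁ (club_inter hreg hunc hC₂ hDclub)
    obtain ⟨γ, hγ, -⟩ := hclub.2.1 0 hord_pos
    obtain ⟨hγ1, hγ2, hγD⟩ := hγ
    have hx : otp (g '' Set.Iio γ) ∈ B := hmem₁ γ hγ1
    rw [← himg γ hγD] at hx
    have hxA : otp (f '' Set.Iio γ) ∈ A := (hABmem _ (hotp_lt γ hγD.1)).mpr hx
    exact hmem₂ γ hγ2 hxA
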